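/- For every n ≥ 1 there exists a binary sequence s₀,…,s_{2^m−1} (a De Bruijn sequence with n = 2^m) such that the walk on the set of m-bit strings defined by shifting in s_i at step i visits every m-bit string exactly once per period, i.e., the map i ↦ (s_{i−1 mod n},…,s_{i−m mod n}) is a bijection from {0,…,n−1} to {0,1}^m. -/

import Mathlib

open Function Equiv

namespace DeBruijnAux

variable {m' : ℕ}

abbrev E (m' : ℕ) := Fin (m' + 1) → Bool

def tgt (e : E m') : Fin m' → Bool := fun j => e j.castSucc
def src (e : E m') : Fin m' → Bool := fun j => e j.succ

lemma castSucc_add_one (j : Fin m') : (j.castSucc : Fin (m' + 1)) + 1 = j.succ := by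
  apply Fin.ext
  have hj := j.isLt
  simp [Fin.val_add, Nat.mod_eq_of_lt (by omega : (j : ℕ) + 1 < m' + 1)]

/-- the rotation permutation -/
def rot : Perm (E m') where
  toFun := fun e j => e (j - 1)
  invFun := fun e j => e (j + 1)
  left_inv := fun e => funext fun j => by show e (j + 1 - 1) = e j; rw [add_sub_cancel_right]
  right_inv := fun e => funext fun j => by show e (j - 1 + 1) = e j; rw [sub_add_cancel]

def Good (π : Perm (E m')) : Prop := ∀ x, src (π x) = tgt x

lemma rot_good : Good (rot (m' := m')) := by
  intro x
  funext j
  show x (j.succ - 1) = x j.castSucc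
  rw [← castSucc_add_one, add_sub_cancel_right]

/-- adjacency relation -/
def R (e e' : E m') : Prop := tgt e = src e'

lemma connected (f g : E m') : Relation.ReflTransGen R f g := by
  classical
  set n := m' + 1 with hn
  -- H : the concatenated word  g ++ f
  set H : ℕ → Bool := fun k => if h : k < n then g ⟨k, h⟩ else
    if h2 : k - n < n then f ⟨k - n, h2⟩ else true with hH
  set w : ℕ → E m' := fun t j => H ((j : ℕ) + n - t) with hw
  have hw0 : w 0 = f := by
    funext j
    have hj := j.isLt
    simp only [hw, hH, Nat.sub_zero]
    rw [dif_neg (by omega), dif_pos (by omega)]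
    congr 1
    apply Fin.ext
    simp
  have hwn : w n = g := by
    funext j
    have hj := j.isLt
    simp only [hw, hH]
    rw [dif_pos (by omega)]
    congr 1
    apply Fin.ext
    simp
  have key : ∀ t, t ≤ n → Relation.ReflTransGen R f (w t) := by
    intro t
    induction t with
    | zero => intro _; rw [hw0]
    | succ t ih =>
      intro ht
      refine Relation.ReflTransGen.tail (ih (by omega)) ?_
      -- R (w t) (w (t+1))
      funext j
      have hj := j.isLt
      show w t j.castSucc = w (t + 1) j.succ
      simp only [hw]
      congr 1
      simp [Fin.val_succ, Fin.coe_castSucc]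
      omega
  have := key n (le_refl n)
  rwa [hwn] at this


section Merge
variable (π : Perm (E m')) (x₀ : E m')

open scoped Classical in
/-- the cycle of the base point, as a Finset -/
noncomputable def C (π : Perm (E m')) (x₀ : E m') : Finset (E m') :=
  Finset.univ.filter (fun x => π.SameCycle x₀ x)

open scoped Classical in
lemma mem_C {π : Perm (E m')} {x₀ x : E m'} : x ∈ C π x₀ ↔ π.SameCycle x₀ x := by
  simp [C]

/-- if the cycle of `x₀` is not everything, there is a mergeable pair -/
lemma exists_pair (hg : Good π) (h : ∃ y, ¬ π.SameCycle x₀ y) :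
    ∃ a b, π.SameCycle x₀ a ∧ ¬ π.SameCycle x₀ b ∧ tgt a = tgt b := by
  by_contra hcon
  push_neg at hcon
  obtain ⟨y, hy⟩ := h
  have step : ∀ f g : E m', R f g → π.SameCycle x₀ f → π.SameCycle x₀ g := by
    intro f g hR hf
    have htg : tgt f = tgt (π⁻¹ g) := by
      have := hg (π⁻¹ g)
      rw [show π (π⁻¹ g) = g from π.apply_symm_apply g] at this
      rw [← this]; exact hR
    have h1 : π.SameCycle x₀ (π⁻¹ g) := by
      by_contra hng
      exact hcon f (π⁻¹ g) hf hng htg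
    exact h1.trans (Equiv.Perm.sameCycle_symm_apply_left.mpr (Equiv.Perm.SameCycle.refl π g))
  have gen : ∀ z, Relation.ReflTransGen R x₀ z → π.SameCycle x₀ z := by
    intro z hz
    induction hz with
    | refl => exact Equiv.Perm.SameCycle.refl π x₀
    | tail hst hR ih => exact step _ _ hR ih
  exact hy (gen y (connected x₀ y))

lemma sameCycle_of_pow {f : Perm (E m')} {x y : E m'} (k : ℕ) (h : (f ^ k) x = y) :
    f.SameCycle x y := ⟨(k : ℤ), by rw [zpow_natCast]; exact h⟩

/-- merging two cycles by a swap -/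
lemma merge (hg : Good π) {a b : E m'} (ha : π.SameCycle x₀ a)
    (hb : ¬ π.SameCycle x₀ b) (htgt : tgt a = tgt b) :
    ∃ σ : Perm (E m'), Good σ ∧ (C π x₀).card < (C σ x₀).card := by
  classical
  set σ : Perm (E m') := π * Equiv.swap a b with hσ
  have hσa : σ a = π b := by simp [hσ]
  have hσb : σ b = π a := by simp [hσ]
  have hσx : ∀ x, x ≠ a → x ≠ b → σ x = π x := by
    intro x hxa hxb
    simp [hσ, Equiv.swap_apply_of_ne_of_ne hxa hxb]
  have hgoodσ : Good σ := by
    intro x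
    by_cases hxa : x = a
    · subst hxa; rw [hσa, hg b, ← htgt]
    by_cases hxb : x = b
    · subst hxb; rw [hσb, hg a, htgt]
    · rw [hσx x hxa hxb, hg x]
  -- key: every element of the cycle of x₀ is σ-same-cycle with a
  have key : ∀ x, π.SameCycle x₀ x → σ.SameCycle x a := by
    intro x hx
    have hxa : π.SameCycle x a := hx.symm.trans ha
    obtain ⟨k, hk, hpk⟩ := hxa.exists_pow_eq'
    -- take the least such k
    have hex : ∃ k, (π ^ k) x = a := ⟨k, hpk⟩
    set k₀ := Nat.find hex with hk₀
    have hpk₀ : (π ^ k₀) x = a := Nat.find_spec hex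
    have hlt : ∀ j < k₀, (π ^ j) x ≠ a := fun j hj => Nat.find_min hex hj
    have hnb : ∀ j, (π ^ j) x ≠ b := by
      intro j hj
      exact hb (hx.trans (sameCycle_of_pow j hj))
    have iter : ∀ j ≤ k₀, (σ ^ j) x = (π ^ j) x := by
      intro j
      induction j with
      | zero => intro _; simp
      | succ j ih =>
        intro hj
        rw [pow_succ', Perm.mul_apply, ih (by omega), pow_succ', Perm.mul_apply]
        show π ((Equiv.swap a b) ((π ^ j) x)) = π ((π ^ j) x)
        rw [Equiv.swap_apply_of_ne_of_ne (hlt j (by omega)) (hnb j)]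
    exact sameCycle_of_pow k₀ (by rw [iter k₀ le_rfl]; exact hpk₀)
  refine ⟨σ, hgoodσ, ?_⟩
  have hsub : insert b (C π x₀) ⊆ C σ x₀ := by
    intro x hx
    rw [Finset.mem_insert] at hx
    have hx₀a : σ.SameCycle x₀ a := key x₀ (Equiv.Perm.SameCycle.refl π x₀)
    rcases hx with rfl | hx
    · -- b: σ b = π a which is in the π-cycle of x₀
      have hπa : π.SameCycle x₀ (π a) :=
        ha.trans (Equiv.Perm.sameCycle_apply_right.mpr (Equiv.Perm.SameCycle.refl π a))
      have h1 : σ.SameCycle (π a) a := key _ hπa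
      have h2 : σ.SameCycle x (π a) := sameCycle_of_pow 1 (by simpa using hσb)
      exact mem_C.mpr (hx₀a.trans ((h2.trans h1).symm))
    · exact mem_C.mpr (hx₀a.trans (key x (mem_C.mp hx)).symm)
  calc (C π x₀).card < (insert b (C π x₀)).card := by
        rw [Finset.card_insert_of_notMem (fun h => hb (mem_C.mp h))]; omega
    _ ≤ (C σ x₀).card := Finset.card_le_card hsub

/-- there is a single-cycle good permutation -/
lemma exists_single_cycle : ∃ π : Perm (E m'), Good π ∧ ∀ x, π.SameCycle ((fun _ => true) : E m') x := by
  classical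
  set x₀ : E m' := fun _ => true
  have main : ∀ k (π : Perm (E m')), Good π →
      Fintype.card (E m') - (C π x₀).card ≤ k →
      ∃ σ : Perm (E m'), Good σ ∧ ∀ x, σ.SameCycle x₀ x := by
    intro k
    induction k with
    | zero =>
      intro π hg hcard
      refine ⟨π, hg, fun x => ?_⟩
      by_contra hx
      have hsub : C π x₀ ⊆ Finset.univ.erase x := by
        intro y hy
        refine Finset.mem_erase.mpr ⟨fun h => hx (h ▸ mem_C.mp hy), Finset.mem_univ y⟩
      have := Finset.card_le_card hsub
      rw [Finset.card_erase_of_mem (Finset.mem_univ x), Finset.card_univ] at this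
      have hpos : 0 < Fintype.card (E m') := Fintype.card_pos
      omega
    | succ k ih =>
      intro π hg hcard
      by_cases hall : ∀ x, π.SameCycle x₀ x
      · exact ⟨π, hg, hall⟩
      · push_neg at hall
        obtain ⟨a, b, hA, hB, hT⟩ := exists_pair π x₀ hg hall
        obtain ⟨σ, hgσ, hlt⟩ := merge π x₀ hg hA hB hT
        refine ih σ hgσ ?_
        have h1 : (C σ x₀).card ≤ Fintype.card (E m') := by
          simpa using Finset.card_le_card (Finset.subset_univ (C σ x₀))
        omega
  exact main (Fintype.card (E m')) rot rot_good (by omega)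

end Merge

lemma exists_circuit :
    ∃ e : ZMod (2 ^ (m' + 1)) → E m', Function.Bijective e ∧
      ∀ i, src (e (i + 1)) = tgt (e i) := by
  classical
  obtain ⟨π, hg, hall⟩ := exists_single_cycle (m' := m')
  set x₀ : E m' := (fun _ => true) with hx₀
  set n := 2 ^ (m' + 1) with hn
  haveI : NeZero n := ⟨pow_ne_zero _ two_ne_zero⟩
  have hper : x₀ ∈ periodicPts π := by
    refine ⟨orderOf π, orderOf_pos π, ?_⟩
    show π^[orderOf π] x₀ = x₀
    rw [Equiv.Perm.iterate_eq_pow, pow_orderOf_eq_one]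
    rfl
  set p := Function.minimalPeriod π x₀ with hp
  have hppos : 0 < p := Function.minimalPeriod_pos_of_mem_periodicPts hper
  have hsurj : ∀ y, ∃ k < p, π^[k] x₀ = y := by
    intro y
    obtain ⟨i, hi, hip⟩ := (hall y).exists_pow_eq'
    exact ⟨i % p, Nat.mod_lt _ hppos, by
      rw [Function.iterate_mod_minimalPeriod_eq]; exact hip⟩
  have hinj := Function.iterate_injOn_Iio_minimalPeriod (f := π) (x := x₀)
  have hcardE : Fintype.card (E m') = n := by simp [hn]
  have hpn : p = n := by
    have hbij : Function.Bijective (fun k : Fin p => π^[(k : ℕ)] x₀) := by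
      constructor
      · intro a b hab
        exact Fin.ext (hinj (Set.mem_Iio.mpr a.isLt) (Set.mem_Iio.mpr b.isLt) hab)
      · intro y
        obtain ⟨k, hk, hky⟩ := hsurj y
        exact ⟨⟨k, hk⟩, hky⟩
    have := Fintype.card_of_bijective hbij
    rw [Fintype.card_fin, hcardE] at this
    exact this
  set e : ZMod n → E m' := fun i => π^[(i.val)] x₀ with he
  have hnat : ∀ k : ℕ, e (k : ZMod n) = π^[k] x₀ := by
    intro k
    show π^[((k : ZMod n)).val] x₀ = π^[k] x₀
    rw [ZMod.val_natCast, ← hpn]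
    exact Function.iterate_mod_minimalPeriod_eq
  have hrep : ∀ i : ZMod n, ((i.val : ℕ) : ZMod n) = i := fun i => ZMod.natCast_rightInverse i
  have hestep : ∀ i, e (i + 1) = π (e i) := by
    intro i
    have h1 : i + 1 = ((i.val + 1 : ℕ) : ZMod n) := by
      push_cast
      rw [hrep i]
    rw [h1, hnat, Function.iterate_succ_apply']
  refine ⟨e, ⟨?_, ?_⟩, ?_⟩
  · intro i j hij
    have hi : (i.val : ℕ) ∈ Set.Iio p := Set.mem_Iio.mpr (by rw [hpn]; exact ZMod.val_lt i)
    have hj : (j.val : ℕ) ∈ Set.Iio p := Set.mem_Iio.mpr (by rw [hpn]; exact ZMod.val_lt j)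
    have := hinj hi hj hij
    rw [← hrep i, ← hrep j, this]
  · intro y
    obtain ⟨k, hk, hky⟩ := hsurj y
    exact ⟨(k : ZMod n), by rw [hnat]; exact hky⟩
  · intro i
    rw [hestep i, hg (e i)]

end DeBruijnAux

/-- for every `m` there is a binary De Bruijn sequence of order
`m`, i.e. a cyclic binary sequence `s` of length `n = 2^m` (indexed by
`ZMod (2^m)`) such that the map `i ↦ (s_{i-1}, …, s_{i-m})` is a bijection onto
the set of `m`-bit strings: the walk on `{0,1}^m` obtained by shifting in `s_i`
at step `i` visits every `m`-bit string exactly once per period. -/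
theorem deBruijn_exists (m : ℕ) :
    ∃ s : ZMod (2 ^ m) → Bool,
      Function.Bijective
        (fun i : ZMod (2 ^ m) => fun j : Fin m => s (i - 1 - (j : ZMod (2 ^ m)))) := by
  cases m with
  | zero =>
    refine ⟨fun _ => true, ?_, ?_⟩
    · intro a b _
      exact Subsingleton.elim (α := ZMod 1) a b
    · intro y
      exact ⟨0, funext fun j => j.elim0⟩
  | succ m' =>
    obtain ⟨e, hbij, hstep⟩ := DeBruijnAux.exists_circuit (m' := m')
    have main : ∀ (jv : ℕ) (h : jv < m' + 1) (i : ZMod (2 ^ (m' + 1))),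
        e i ⟨jv, h⟩ = e ((i - 1 - ((jv : ℕ) : ZMod (2 ^ (m' + 1)))) + 1) 0 := by
      intro jv
      induction jv with
      | zero =>
        intro h i
        have : (i - 1 - ((0 : ℕ) : ZMod (2 ^ (m' + 1)))) + 1 = i := by push_cast; ring
        rw [this]
        rfl
      | succ jv ih =>
        intro h i
        have hjv : jv < m' + 1 := by omega
        have hjv' : jv < m' := by omega
        set j0 : Fin m' := ⟨jv, hjv'⟩ with hj0
        have hs := hstep (i - 1)
        rw [sub_add_cancel] at hs
        have h1 : e i ⟨jv + 1, h⟩ = e (i - 1) ⟨jv, hjv⟩ := by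
          have := congrFun hs j0
          exact this
        rw [h1, ih hjv (i - 1)]
        congr 2
        push_cast
        ring
    refine ⟨fun i => e (i + 1) 0, ?_⟩
    have heq : (fun (i : ZMod (2 ^ (m' + 1))) => fun (j : Fin (m' + 1)) =>
        e ((i - 1 - ((j : ℕ) : ZMod (2 ^ (m' + 1)))) + 1) 0) = e := by
      funext i j
      rw [← main j.val j.isLt i]
    have : Function.Bijective (fun (i : ZMod (2 ^ (m' + 1))) => fun (j : Fin (m' + 1)) =>
        e ((i - 1 - ((j : ℕ) : ZMod (2 ^ (m' + 1)))) + 1) 0) := by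
      rw [heq]; exact hbij
    exact this
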